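/- arXiv:2411.10035 — 5 statements merged into one kernel-verified Lean document; each statement's English description precedes it below -/
import Mathlib

section
/- Let Z be a topological space, X ⊆ Z, and {G_t : t ∈ T} a family of G_δ-subsets of Z whose union is disjoint from X. If there are open sets V_t ⊇ G_t such that the indexed family {V_t} is point-finite in X (i.e., each x ∈ X belongs to only finitely many V_t), then there exists a G_δ-subset G of Z with ⋃_t G_t ⊆ G ⊆ Z \ X. -/
/-- Tkachuk's lemma: if a family of `G_δ`-sets disjoint from `X` has an open expansion
which is point-finite in `X`, then the union of the family is contained in a `G_δ`-set
disjoint from `X`. -/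
theorem gdelta_separation_of_pointFinite_expansion
    {Z : Type*} [TopologicalSpace Z] {T : Type*} (X : Set Z)
    (G V : T → Set Z)
    (hGδ : ∀ t, IsGδ (G t)) (hdisj : (⋃ t, G t) ∩ X = ∅)
    (hopen : ∀ t, IsOpen (V t)) (hsub : ∀ t, G t ⊆ V t)
    (hpf : ∀ x ∈ X, {t | x ∈ V t}.Finite) :
    ∃ G' : Set Z, IsGδ G' ∧ (⋃ t, G t) ⊆ G' ∧ G' ⊆ Xᶜ := by
  choose U hUopen hUeq using fun t => (hGδ t).eq_iInter_nat
  -- decreasing open sets containing G t, inside V t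
  set W : T → ℕ → Set Z := fun t n => V t ∩ ⋂ k ∈ Finset.range (n+1), U t k with hW
  have hWopen : ∀ t n, IsOpen (W t n) := fun t n =>
    (hopen t).inter (isOpen_biInter_finset fun k _ => hUopen t k)
  have hWanti : ∀ t, ∀ m n, m ≤ n → W t n ⊆ W t m := by
    intro t m n hmn
    refine Set.inter_subset_inter_right _ ?_
    intro x hx
    simp only [Set.mem_iInter, Finset.mem_range] at hx ⊢
    exact fun k hk => hx k (hk.trans_le (by omega))
  have hGW : ∀ t n, G t ⊆ W t n := by
    intro t n x hx
    refine ⟨hsub t hx, ?_⟩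
    have : x ∈ ⋂ k, U t k := by rw [← hUeq t]; exact hx
    simp only [Set.mem_iInter] at this ⊢
    exact fun k _ => this k
  have hWG : ∀ t, (⋂ n, W t n) ⊆ G t := by
    intro t x hx
    rw [hUeq t]
    refine Set.mem_iInter.2 fun k => ?_
    have := (Set.mem_iInter.1 hx k).2
    simp only [Set.mem_iInter, Finset.mem_range] at this
    exact this k (by omega)
  refine ⟨⋂ n, ⋃ t, W t n, ?_, ?_, ?_⟩
  · exact .iInter_of_isOpen fun n => isOpen_iUnion fun t => hWopen t n
  · intro x hx
    obtain ⟨t, ht⟩ := Set.mem_iUnion.1 hx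
    exact Set.mem_iInter.2 fun n => Set.mem_iUnion.2 ⟨t, hGW t n ht⟩
  · intro x hx hxX
    -- choose for each n a t n with x ∈ W (t n) n
    choose f hf using fun n => Set.mem_iUnion.1 (Set.mem_iInter.1 hx n)
    have hfF : ∀ n, f n ∈ {t | x ∈ V t} := fun n => (hf n).1
    have hfin : {t | x ∈ V t}.Finite := hpf x hxX
    haveI : Finite {t // t ∈ {t | x ∈ V t}} := hfin
    obtain ⟨⟨t, htF⟩, htfib⟩ :=
      Finite.exists_infinite_fiber (fun n : ℕ => (⟨f n, hfF n⟩ : {t // t ∈ {t | x ∈ V t}}))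
    have hinf : {n : ℕ | f n = t}.Infinite := by
      rw [Set.infinite_coe_iff] at htfib
      refine htfib.mono ?_
      intro n hn
      simpa using congrArg Subtype.val hn
    have hxG : x ∈ G t := by
      apply hWG t
      refine Set.mem_iInter.2 fun n => ?_
      obtain ⟨m, hm, hnm⟩ := hinf.exists_gt n
      exact hWanti t n m hnm.le (hm ▸ hf m)
    have : x ∈ (⋃ t, G t) ∩ X := ⟨Set.mem_iUnion.2 ⟨t, hxG⟩, hxX⟩
    rw [hdisj] at this
    exact this
end

section
/- Every Lindelöf scattered regular space is a Menger space. -/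
/-- A subset `A` of a topological space is scattered if every nonempty subset of `A`
has a point isolated in it. -/
def IsScatteredSet {Z : Type*} [TopologicalSpace Z] (A : Set Z) : Prop :=
  ∀ s ⊆ A, s.Nonempty → ∃ x ∈ s, ∃ U : Set Z, IsOpen U ∧ U ∩ s = {x}

/-- A space is Menger if for every sequence of open covers there are finite
subfamilies whose union is a cover. -/
def IsMengerSpace (X : Type*) [TopologicalSpace X] : Prop :=
  ∀ 𝒰 : ℕ → Set (Set X),
    (∀ n, ∀ u ∈ 𝒰 n, IsOpen u) → (∀ n, ⋃₀ 𝒰 n = Set.univ) →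
    ∃ 𝒱 : ℕ → Set (Set X),
      (∀ n, 𝒱 n ⊆ 𝒰 n ∧ (𝒱 n).Finite) ∧ ⋃ n, ⋃₀ 𝒱 n = Set.univ

/-- Relative Menger selection property for a subset `A`, with respect to open covers of
the whole space. -/
def MengerFor {X : Type*} [TopologicalSpace X] (A : Set X) : Prop :=
  ∀ 𝒰 : ℕ → Set (Set X),
    (∀ n, ∀ u ∈ 𝒰 n, IsOpen u) → (∀ n, ⋃₀ 𝒰 n = Set.univ) →
    ∃ 𝒱 : ℕ → Set (Set X),
      (∀ n, 𝒱 n ⊆ 𝒰 n ∧ (𝒱 n).Finite) ∧ A ⊆ ⋃ n, ⋃₀ 𝒱 n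

theorem MengerFor.mono {X : Type*} [TopologicalSpace X] {A B : Set X}
    (h : MengerFor B) (hAB : A ⊆ B) : MengerFor A := by
  intro 𝒰 h1 h2
  obtain ⟨𝒱, h𝒱, hcov⟩ := h 𝒰 h1 h2
  exact ⟨𝒱, h𝒱, hAB.trans hcov⟩

theorem mengerFor_empty {X : Type*} [TopologicalSpace X] : MengerFor (∅ : Set X) := by
  intro 𝒰 h1 h2
  exact ⟨fun _ => ∅, fun n => ⟨Set.empty_subset _, Set.finite_empty⟩, Set.empty_subset _⟩

theorem mengerFor_iUnion {X : Type*} [TopologicalSpace X] {A : ℕ → Set X}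
    (h : ∀ k, MengerFor (A k)) : MengerFor (⋃ k, A k) := by
  intro 𝒰 h1 h2
  let e : ℕ ≃ ℕ × ℕ := (Denumerable.eqv (ℕ × ℕ)).symm
  have key : ∀ k, ∃ 𝒱 : ℕ → Set (Set X),
      (∀ n, 𝒱 n ⊆ 𝒰 (e.symm (k, n)) ∧ (𝒱 n).Finite) ∧ A k ⊆ ⋃ n, ⋃₀ 𝒱 n := by
    intro k
    exact h k (fun n => 𝒰 (e.symm (k, n))) (fun n => h1 _) (fun n => h2 _)
  choose V hV hVcov using key
  refine ⟨fun m => V (e m).1 (e m).2, ?_, ?_⟩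
  · intro m
    refine ⟨?_, (hV (e m).1 (e m).2).2⟩
    have := (hV (e m).1 (e m).2).1
    simpa using this
  · intro x hx
    obtain ⟨k, hk⟩ := Set.mem_iUnion.mp hx
    obtain ⟨n, hn⟩ := Set.mem_iUnion.mp (hVcov k hk)
    refine Set.mem_iUnion.mpr ⟨e.symm (k, n), ?_⟩
    simpa using hn

theorem mengerFor_of_countable_sUnion {X : Type*} [TopologicalSpace X]
    {𝒪 : Set (Set X)} (hc : 𝒪.Countable) (h : ∀ U ∈ 𝒪, MengerFor U) :
    MengerFor (⋃₀ 𝒪) := by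
  rcases 𝒪.eq_empty_or_nonempty with h0 | hne
  · subst h0; simpa using mengerFor_empty
  · obtain ⟨f, hf⟩ := hc.exists_eq_range hne
    have : ⋃₀ 𝒪 = ⋃ n, f n := by rw [hf]; exact Set.sUnion_range f
    rw [this]
    exact mengerFor_iUnion fun k => h (f k) (hf ▸ Set.mem_range_self k)

/-- Every Lindelöf scattered regular space is Menger. -/
theorem menger_of_lindelof_scattered
    {X : Type*} [TopologicalSpace X] [RegularSpace X] [LindelofSpace X]
    (hscat : IsScatteredSet (Set.univ : Set X)) :
    IsMengerSpace X := by
  classical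
  -- W is the union of all open sets with the relative Menger property
  set W : Set X := {x | ∃ U : Set X, IsOpen U ∧ MengerFor U ∧ x ∈ U} with hW
  -- every closed subset of W has the relative Menger property
  have closedW : ∀ C : Set X, IsClosed C → C ⊆ W → MengerFor C := by
    intro C hC hCW
    have hL : IsLindelof C := hC.isLindelof
    -- index: points of W with their witnessing open sets, via choice
    have : ∀ x : C, ∃ U : Set X, IsOpen U ∧ MengerFor U ∧ (x : X) ∈ U := fun x => hCW x.2
    choose U hUo hUM hxU using this
    obtain ⟨r, hrc, hrcov⟩ := hL.elim_countable_subcover U hUo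
      (fun x hx => Set.mem_iUnion.mpr ⟨⟨x, hx⟩, hxU _⟩)
    have : MengerFor (⋃₀ (U '' r)) := by
      refine mengerFor_of_countable_sUnion (hrc.image U) ?_
      rintro V ⟨i, _, rfl⟩
      exact hUM i
    refine this.mono ?_
    intro x hx
    obtain ⟨i, hi, hxi⟩ := Set.mem_iUnion₂.mp (hrcov hx)
    exact ⟨U i, ⟨i, hi, rfl⟩, hxi⟩
  -- W = univ
  have hWuniv : W = Set.univ := by
    by_contra hne
    have hne' : Wᶜ.Nonempty := by
      rcases Set.eq_empty_or_nonempty Wᶜ with h0 | h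
      · exact absurd (Set.compl_empty_iff.mp h0) hne
      · exact h
    obtain ⟨x, hxC, V, hVo, hVC⟩ := hscat Wᶜ (Set.subset_univ _) hne'
    -- W is open
    have hWopen : IsOpen W := by
      refine isOpen_iff_forall_mem_open.mpr ?_
      rintro y ⟨U, hUo, hUM, hyU⟩
      exact ⟨U, fun z hz => ⟨U, hUo, hUM, hz⟩, hUo, hyU⟩
    have hWc : IsClosed Wᶜ := hWopen.isClosed_compl
    -- regularity: closed nbhd t of x inside V
    have hxV : x ∈ V ∩ Wᶜ := by rw [hVC]; rfl
    obtain ⟨t, htn, htc, htV⟩ := exists_mem_nhds_isClosed_subset (hVo.mem_nhds hxV.1)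
    -- interior t has the Menger property
    have hMt : MengerFor (interior t) := by
      intro 𝒰 h1 h2
      have hx0 : x ∈ ⋃₀ 𝒰 0 := by rw [h2]; trivial
      obtain ⟨U₀, hU₀, hxU₀⟩ := hx0
      have hCc : IsClosed (t \ U₀) := htc.sdiff (h1 0 _ hU₀)
      have hCW : t \ U₀ ⊆ W := by
        rintro y ⟨hyt, hyU₀⟩
        by_contra hyW
        have : y ∈ V ∩ Wᶜ := ⟨htV hyt, hyW⟩
        rw [hVC] at this
        exact hyU₀ (this ▸ hxU₀)
      obtain ⟨𝒱', h𝒱', hcov'⟩ := closedW _ hCc hCW (fun n => 𝒰 (n + 1))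
        (fun n => h1 (n + 1)) (fun n => h2 (n + 1))
      refine ⟨fun n => Nat.rec {U₀} (fun m _ => 𝒱' m) n, ?_, ?_⟩
      · intro n
        cases n with
        | zero => exact ⟨by simpa using hU₀, Set.finite_singleton _⟩
        | succ m => exact h𝒱' m
      · intro y hy
        by_cases hyU₀ : y ∈ U₀
        · exact Set.mem_iUnion.mpr ⟨0, U₀, rfl, hyU₀⟩
        · have : y ∈ t \ U₀ := ⟨interior_subset hy, hyU₀⟩
          obtain ⟨n, hn⟩ := Set.mem_iUnion.mp (hcov' this)
          exact Set.mem_iUnion.mpr ⟨n + 1, hn⟩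
    -- then x ∈ W, contradiction
    exact hxC ⟨interior t, isOpen_interior, hMt, mem_interior_iff_mem_nhds.mpr htn⟩
  -- conclude
  intro 𝒰 h1 h2
  have : MengerFor (Set.univ : Set X) := closedW Set.univ isClosed_univ hWuniv.ge
  obtain ⟨𝒱, h𝒱, hcov⟩ := this 𝒰 h1 h2
  exact ⟨𝒱, h𝒱, Set.eq_univ_of_univ_subset hcov⟩
end

section
/- Every Lindelöf scattered regular space is a Hurewicz space. -/
/-- A space is Hurewicz if for every sequence of open covers there are finite
subfamilies such that every point belongs to the union of all but finitely many of them. -/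
def IsHurewiczSpace (X : Type*) [TopologicalSpace X] : Prop :=
  ∀ 𝒰 : ℕ → Set (Set X),
    (∀ n, ∀ u ∈ 𝒰 n, IsOpen u) → (∀ n, ⋃₀ 𝒰 n = Set.univ) →
    ∃ 𝒱 : ℕ → Set (Set X),
      (∀ n, 𝒱 n ⊆ 𝒰 n ∧ (𝒱 n).Finite) ∧
      ∀ x : X, ∀ᶠ n in Filter.atTop, x ∈ ⋃₀ 𝒱 n

/-- Relative Hurewicz property of a subset. -/
def HurSet {X : Type*} [TopologicalSpace X] (A : Set X) : Prop :=
  ∀ 𝒰 : ℕ → Set (Set X),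
    (∀ n, ∀ u ∈ 𝒰 n, IsOpen u) → (∀ n, A ⊆ ⋃₀ 𝒰 n) →
    ∃ 𝒱 : ℕ → Set (Set X),
      (∀ n, 𝒱 n ⊆ 𝒰 n ∧ (𝒱 n).Finite) ∧
      ∀ x ∈ A, ∀ᶠ n in Filter.atTop, x ∈ ⋃₀ 𝒱 n

lemma hurSet_empty {X : Type*} [TopologicalSpace X] : HurSet (∅ : Set X) := by
  intro 𝒰 _ _
  exact ⟨fun _ => ∅, fun n => ⟨Set.empty_subset _, Set.finite_empty⟩, by simp⟩

/-- Countable unions of relatively Hurewicz subsets of `A` covering `A` give `HurSet A`. -/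
lemma hurSet_iUnion {X : Type*} [TopologicalSpace X] (A : Set X) (B : ℕ → Set X)
    (hBA : ∀ k, B k ⊆ A) (hcov : A ⊆ ⋃ k, B k) (hH : ∀ k, HurSet (B k)) : HurSet A := by
  intro 𝒰 hopen hc
  choose 𝒱 h1 h2 using fun k => hH k 𝒰 hopen (fun n => (hBA k).trans (hc n))
  refine ⟨fun n => ⋃ k ∈ Finset.range (n + 1), 𝒱 k n, fun n => ⟨?_, ?_⟩, ?_⟩
  · intro t ht
    simp only [Set.mem_iUnion] at ht
    obtain ⟨k, _, htk⟩ := ht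
    exact (h1 k n).1 htk
  · exact Set.Finite.biUnion (Finset.range (n + 1)).finite_toSet (fun k _ => (h1 k n).2)
  · intro x hx
    obtain ⟨k, hxk⟩ := Set.mem_iUnion.1 (hcov hx)
    obtain ⟨N, hN⟩ := Filter.eventually_atTop.1 (h2 k x hxk)
    refine Filter.eventually_atTop.2 ⟨max N k, fun n hn => ?_⟩
    obtain ⟨t, ht, hxt⟩ := hN n (le_trans (le_max_left _ _) hn)
    refine ⟨t, ?_, hxt⟩
    simp only [Set.mem_iUnion]
    exact ⟨k, Finset.mem_range.2 (Nat.lt_succ_of_le (le_trans (le_max_right N k) hn)), ht⟩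

/-- Every Lindelöf scattered regular space is Hurewicz. -/
theorem hurewicz_of_lindelof_scattered
    {X : Type*} [TopologicalSpace X] [RegularSpace X] [LindelofSpace X]
    (hscat : IsScatteredSet (Set.univ : Set X)) :
    IsHurewiczSpace X := by
  classical
  set 𝒢 : Set (Set X) := {U | IsOpen U ∧ ∀ F : Set X, IsClosed F → F ⊆ U → HurSet F} with h𝒢
  set W : Set X := ⋃₀ 𝒢 with hWdef
  have hWopen : IsOpen W := isOpen_sUnion fun U hU => hU.1
  -- every closed subset of W is relatively Hurewicz
  have hW : ∀ F : Set X, IsClosed F → F ⊆ W → HurSet F := by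
    intro F hFcl hFW
    rcases F.eq_empty_or_nonempty with rfl | hFne
    · exact hurSet_empty
    have hFL : IsLindelof F := hFcl.isLindelof
    have hsel : ∀ x : F, ∃ V : Set X, (x : X) ∈ interior V ∧ IsClosed V ∧
        ∃ G ∈ 𝒢, V ⊆ G := by
      intro x
      obtain ⟨G, hG, hxG⟩ := hFW x.2
      obtain ⟨V, hVmem, hVcl, hVG⟩ := exists_mem_nhds_isClosed_subset (hG.1.mem_nhds hxG)
      exact ⟨V, mem_interior_iff_mem_nhds.2 hVmem, hVcl, G, hG, hVG⟩
    choose V hVmem hVcl G hG hVG using hsel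
    obtain ⟨t, htc, htcov⟩ := hFL.elim_countable_subcover (fun x : F => interior (V x))
      (fun _ => isOpen_interior) (fun y hy => Set.mem_iUnion.2 ⟨⟨y, hy⟩, hVmem ⟨y, hy⟩⟩)
    have htne : t.Nonempty := by
      obtain ⟨y, hy⟩ := hFne
      obtain ⟨x, hxt, _⟩ := Set.mem_iUnion₂.1 (htcov hy)
      exact ⟨x, hxt⟩
    obtain ⟨f, hf⟩ := htc.exists_eq_range htne
    refine hurSet_iUnion F (fun k => F ∩ V (f k)) (fun k => Set.inter_subset_left) ?_ ?_
    · intro y hy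
      have := htcov hy
      rw [hf] at this
      obtain ⟨x, hxr, hyx⟩ := Set.mem_iUnion₂.1 this
      obtain ⟨k, rfl⟩ := hxr
      exact Set.mem_iUnion.2 ⟨k, hy, interior_subset hyx⟩
    · intro k
      exact (hG (f k)).2 _ (hFcl.inter (hVcl (f k)))
        ((Set.inter_subset_right).trans (hVG (f k)))
  -- the union of 𝒢 is all of X
  have hsub : (Set.univ : Set X) ⊆ W := by
    by_contra hns
    have hne : (Set.univ \ W).Nonempty := Set.diff_nonempty.2 hns
    obtain ⟨x, hxs, U, hUopen, hUx⟩ := hscat (Set.univ \ W) Set.diff_subset hne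
    have hxU : x ∈ U := by
      have : x ∈ U ∩ (Set.univ \ W) := hUx ▸ rfl
      exact this.1
    have hxnW : x ∉ W := hxs.2
    -- W ∪ U belongs to 𝒢
    have hGU : (W ∪ U) ∈ 𝒢 := by
      refine ⟨hWopen.union hUopen, ?_⟩
      intro F hFcl hFWU
      have hFW' : F ⊆ W ∪ {x} := by
        intro y hy
        rcases hFWU hy with h | h
        · exact Or.inl h
        · by_cases hyW : y ∈ W
          · exact Or.inl hyW
          · have : y ∈ U ∩ (Set.univ \ W) := ⟨h, Set.mem_univ y, hyW⟩
            rw [hUx] at this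
            exact Or.inr this
      by_cases hxF : x ∈ F
      · intro 𝒰 hopen hc
        choose u hu hxu using fun n => hc n hxF
        have hC : ∀ n, ∃ C : Set X, C ∈ nhds x ∧ IsClosed C ∧ C ⊆ u n := fun n =>
          exists_mem_nhds_isClosed_subset ((hopen n _ (hu n)).mem_nhds (hxu n))
        choose C hCn hCcl hCu using hC
        have hFm : ∀ m, HurSet (F \ interior (C m)) := by
          intro m
          refine hW _ (hFcl.sdiff isOpen_interior) ?_
          intro y hy
          rcases hFW' hy.1 with h | h
          · exact h
          · exact absurd (h ▸ mem_interior_iff_mem_nhds.2 (hCn m)) hy.2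
        choose 𝒱m h1 h2 using fun m => hFm m 𝒰 hopen
          (fun n => Set.diff_subset.trans (hc n))
        refine ⟨fun n => insert (u n) (⋃ m ∈ Finset.range (n + 1), 𝒱m m n),
          fun n => ⟨?_, ?_⟩, ?_⟩
        · refine Set.insert_subset (hu n) ?_
          intro s hs
          simp only [Set.mem_iUnion] at hs
          obtain ⟨m, _, hsm⟩ := hs
          exact (h1 m n).1 hsm
        · exact Set.Finite.insert _ (Set.Finite.biUnion (Finset.range (n + 1)).finite_toSet
            (fun m _ => (h1 m n).2))
        · intro y hyF
          by_cases hy : ∀ m, y ∈ interior (C m)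
          · refine Filter.Eventually.of_forall fun n => ?_
            exact ⟨u n, Set.mem_insert _ _, hCu n (interior_subset (hy n))⟩
          · push_neg at hy
            obtain ⟨m, hm⟩ := hy
            obtain ⟨N, hN⟩ := Filter.eventually_atTop.1 (h2 m y ⟨hyF, hm⟩)
            refine Filter.eventually_atTop.2 ⟨max N m, fun n hn => ?_⟩
            obtain ⟨s, hs, hys⟩ := hN n (le_trans (le_max_left _ _) hn)
            refine ⟨s, Set.mem_insert_of_mem _ ?_, hys⟩
            simp only [Set.mem_iUnion]
            exact ⟨m, Finset.mem_range.2 (Nat.lt_succ_of_le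
              (le_trans (le_max_right N m) hn)), hs⟩
      · refine hW F hFcl ?_
        intro y hy
        rcases hFW' hy with h | h
        · exact h
        · exact absurd (h ▸ hy) hxF
    have : x ∈ W := Set.subset_sUnion_of_mem hGU (Or.inr hxU)
    exact hxnW this
  -- conclude
  intro 𝒰 hopen hc
  obtain ⟨𝒱, h1, h2⟩ := hW Set.univ isClosed_univ hsub 𝒰 hopen (fun n => (hc n).ge)
  exact ⟨𝒱, h1, fun x => h2 x (Set.mem_univ x)⟩
end

section
/- Let Y be a first-countable Tychonoff space, K a compactification of Y, and y ∈ Y. Then y has countable character in K; in particular there exist open sets W_n ⊆ K with closure(W_{n+1}) ⊆ W_n and ⋂_n W_n = ⋂_n closure(W_n) = {y}. -/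
open Filter Topology

/-- If `K` is a compactification of a first-countable Tychonoff space `Y`, then every
point of `Y` has countable character in `K`; in particular it admits a decreasing
sequence of open sets as in the statement. -/
theorem countable_character_in_compactification
    {Y K : Type*} [TopologicalSpace Y] [FirstCountableTopology Y] [T35Space Y]
    [TopologicalSpace K] [CompactSpace K] [T2Space K]
    (e : Y → K) (he : Topology.IsEmbedding e) (hdense : DenseRange e) (y : Y) :
    (nhds (e y)).IsCountablyGenerated ∧
      ∃ W : ℕ → Set K, (∀ n, IsOpen (W n)) ∧
        (∀ n, closure (W (n + 1)) ⊆ W n) ∧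
        (⋂ n, W n) = {e y} ∧ (⋂ n, closure (W n)) = {e y} := by
  set p := e y with hp
  obtain ⟨B, hB⟩ := (𝓝 y).exists_antitone_basis
  have hmap : Filter.map e (𝓝 y) = 𝓝[Set.range e] p := he.map_nhds_eq y
  -- choose open sets V n in K tracing the basis on the dense set
  have hV : ∀ n, ∃ V : Set K, IsOpen V ∧ p ∈ V ∧ V ∩ Set.range e ⊆ e '' B n := by
    intro n
    have h1 : e '' B n ∈ 𝓝[Set.range e] p := by
      rw [← hmap]
      exact Filter.image_mem_map (hB.mem n)
    rw [mem_nhdsWithin] at h1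
    obtain ⟨V, hVo, hpV, hsub⟩ := h1
    exact ⟨V, hVo, hpV, hsub⟩
  choose V hVo hpV hVsub using hV
  -- the finite intersections and their closures
  set V' : ℕ → Set K := fun n => ⋂ k ∈ Finset.range (n + 1), V k with hV'
  have hV'o : ∀ n, IsOpen (V' n) := fun n =>
    isOpen_biInter_finset fun k _ => hVo k
  have hpV' : ∀ n, p ∈ V' n := fun n => Set.mem_biInter fun k _ => hpV k
  have hV'sub : ∀ n, V' n ⊆ V n := fun n =>
    Set.biInter_subset_of_mem (Finset.self_mem_range_succ n)
  have hV'anti : Antitone V' := by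
    intro m n hmn
    exact Set.biInter_subset_biInter_left
      (Finset.range_subset_range.2 (Nat.succ_le_succ hmn))
  set F : ℕ → Set K := fun n => closure (V' n) with hF
  have hFc : ∀ n, IsClosed (F n) := fun n => isClosed_closure
  have hpF : ∀ n, p ∈ F n := fun n => subset_closure (hpV' n)
  have hFanti : Antitone F := fun m n hmn => closure_mono (hV'anti hmn)
  -- the intersection of the F n is {p}
  have hFiInter : (⋂ n, F n) = {p} := by
    apply Set.eq_singleton_iff_unique_mem.2
    refine ⟨Set.mem_iInter.2 hpF, fun q hq => ?_⟩
    by_contra hqp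
    -- find a closed neighborhood of p avoiding q
    obtain ⟨A, hA, hAc, hAsub⟩ :=
      exists_mem_nhds_isClosed_subset (s := {q}ᶜ)
        (compl_singleton_mem_nhds (fun h => hqp (h ▸ rfl)))
    have hintA : interior A ∈ 𝓝 p := interior_mem_nhds.2 hA
    have hpre : e ⁻¹' interior A ∈ 𝓝 y := by
      have : Set.range e ∩ interior A ∈ 𝓝[Set.range e] p :=
        inter_mem_nhdsWithin _ hintA
      rw [← hmap, Filter.mem_map] at this
      exact mem_of_superset this (by intro x hx; exact hx.2)
    obtain ⟨n, hn⟩ := hB.mem_iff.1 hpre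
    have himg : e '' B n ⊆ interior A := by
      rintro _ ⟨x, hx, rfl⟩; exact hn hx
    have hVnA : V n ∩ Set.range e ⊆ A :=
      fun x hx => interior_subset (himg (hVsub n hx))
    have : F n ⊆ A := by
      have h1 : V n ⊆ closure (V n ∩ Set.range e) :=
        Dense.open_subset_closure_inter hdense (hVo n)
      calc F n ⊆ closure (V n) := closure_mono (hV'sub n)
        _ ⊆ closure (closure (V n ∩ Set.range e)) := closure_mono h1
        _ = closure (V n ∩ Set.range e) := closure_closure
        _ ⊆ closure A := closure_mono hVnA
        _ = A := hAc.closure_eq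
    exact hAsub (this (Set.mem_iInter.1 hq n)) rfl
  -- by compactness, the F n form a neighborhood basis at p
  have hkey : ∀ U ∈ 𝓝 p, ∃ n, F n ⊆ U := by
    intro U hU
    apply exists_subset_nhds_of_compactSpace (hFanti.directed_ge) hFc
    intro x hx
    rw [hFiInter] at hx
    rwa [hx]
  have hbasis : (𝓝 p).HasBasis (fun _ : ℕ => True) F := by
    constructor
    intro s
    constructor
    · intro hs
      obtain ⟨n, hn⟩ := hkey s hs
      exact ⟨n, trivial, hn⟩
    · rintro ⟨n, -, hn⟩
      exact mem_of_superset (mem_of_superset ((hV'o n).mem_nhds (hpV' n))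
        subset_closure) hn
  have hcg : (𝓝 p).IsCountablyGenerated := hbasis.isCountablyGenerated
  refine ⟨hcg, ?_⟩
  -- now build the nested sequence W
  obtain ⟨U, hU⟩ := (𝓝 p).exists_antitone_basis
  have step : ∀ S : Set K, ∃ T : Set K, IsOpen T ∧ p ∈ T ∧
      (S ∈ 𝓝 p → closure T ⊆ S) := by
    intro S
    by_cases hS : S ∈ 𝓝 p
    · obtain ⟨t, ht, htc, hts⟩ := exists_mem_nhds_isClosed_subset hS
      exact ⟨interior t, isOpen_interior, mem_interior_iff_mem_nhds.2 ht,
        fun _ => (closure_minimal interior_subset htc).trans hts⟩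
    · exact ⟨Set.univ, isOpen_univ, Set.mem_univ _, fun h => absurd h hS⟩
  choose T hTo hTp hTc using step
  set W : ℕ → Set K := fun n =>
    Nat.rec (T (U 0)) (fun n Wn => T (Wn ∩ U (n + 1))) n with hW
  have hWo : ∀ n, IsOpen (W n) := by
    intro n; cases n with
    | zero => exact hTo _
    | succ m => exact hTo _
  have hWp : ∀ n, p ∈ W n := by
    intro n; cases n with
    | zero => exact hTp _
    | succ m => exact hTp _
  have hmemnhds : ∀ n, W n ∩ U (n + 1) ∈ 𝓝 p := fun n =>
    Filter.inter_mem ((hWo n).mem_nhds (hWp n)) (hU.mem (n + 1))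
  have hWcl : ∀ n, closure (W (n + 1)) ⊆ W n ∩ U (n + 1) := by
    intro n
    exact hTc _ (hmemnhds n)
  have hWU : ∀ n, W n ⊆ U n := by
    intro n; cases n with
    | zero => exact subset_closure.trans (hTc _ (hU.mem 0))
    | succ m => exact subset_closure.trans ((hWcl m).trans Set.inter_subset_right)
  have hWsingle : (⋂ n, W n) = {p} := by
    apply Set.eq_singleton_iff_unique_mem.2
    refine ⟨Set.mem_iInter.2 hWp, fun q hq => ?_⟩
    by_contra hqp
    have h1 : {q}ᶜ ∈ 𝓝 p := compl_singleton_mem_nhds (fun h => hqp (h ▸ rfl))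
    obtain ⟨n, -, hn⟩ := hU.toHasBasis.mem_iff.1 h1
    exact hn (hWU n (Set.mem_iInter.1 hq n)) rfl
  refine ⟨W, hWo, fun n => (hWcl n).trans Set.inter_subset_left, hWsingle, ?_⟩
  apply Set.Subset.antisymm
  · rw [← hWsingle]
    intro x hx
    apply Set.mem_iInter.2
    intro n
    exact ((hWcl n).trans Set.inter_subset_left) (Set.mem_iInter.1 hx (n + 1))
  · rw [← hWsingle]
    exact Set.iInter_mono fun n => subset_closure
end

section
/- Let K_γ (γ ∈ Γ) be compact Hausdorff spaces and a ∈ ∏ K_γ. Suppose for each γ there are open sets W_{γ,n} ⊆ K_γ with closure(W_{γ,n+1}) ⊆ W_{γ,n} and ⋂_n closure(W_{γ,n}) = {a_γ}. Define U_{ξ,n} = {z ∈ ∏ K_γ : z(ξ) ∉ closure(W_{ξ,n})}. Then (1) the union of all U_{ξ,n} is ∏ K_γ \ {a}, and (2) for every x in the Σ-product Σ(∏ K_γ, a), the family of pairs (ξ,n) with x ∈ closure(U_{ξ,n}) is countable. -/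
/-- The Σ-product of the family `Y` based at the point `c`. -/
def SigmaProduct {Γ : Type*} (Y : Γ → Type*) (c : ∀ γ, Y γ) : Set (∀ γ, Y γ) :=
  {x | {γ | x γ ≠ c γ}.Countable}

/-- Given compact Hausdorff spaces `K γ`, a point `a` of the product and decreasing
open neighborhoods `W γ n` of `a γ` with intersection of closures `{a γ}`, the open
sets `U ξ n = {z | z ξ ∉ closure (W ξ n)}` cover the complement of `{a}` and, for any
point `x` of the Σ-product based at `a`, only countably many of them have `x` in
their closure. -/
theorem sigmaProduct_cover_lemma
    {Γ : Type*} {K : Γ → Type*} [∀ γ, TopologicalSpace (K γ)]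
    [∀ γ, CompactSpace (K γ)] [∀ γ, T2Space (K γ)]
    (a : ∀ γ, K γ) (W : ∀ γ, ℕ → Set (K γ))
    (hopen : ∀ γ n, IsOpen (W γ n))
    (hdec : ∀ γ n, closure (W γ (n + 1)) ⊆ W γ n)
    (hint : ∀ γ, (⋂ n, closure (W γ n)) = {a γ}) :
    (⋃ (ξ : Γ) (n : ℕ), {z : ∀ γ, K γ | z ξ ∉ closure (W ξ n)}) = {a}ᶜ ∧
      ∀ x ∈ SigmaProduct K a,
        {p : Γ × ℕ | x ∈ closure {z : ∀ γ, K γ | z p.1 ∉ closure (W p.1 p.2)}}.Countable := by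
  have ha : ∀ γ n, a γ ∈ closure (W γ n) := by
    intro γ n
    have h : a γ ∈ ⋂ n, closure (W γ n) := by rw [hint γ]; rfl
    exact Set.mem_iInter.mp h n
  have haW : ∀ γ n, a γ ∈ W γ n := fun γ n => hdec γ n (ha γ (n + 1))
  constructor
  · ext z
    simp only [Set.mem_iUnion, Set.mem_setOf_eq, Set.mem_compl_iff, Set.mem_singleton_iff]
    constructor
    · rintro ⟨ξ, n, h⟩ rfl
      exact h (ha ξ n)
    · intro hz
      have hex : ∃ ξ, z ξ ≠ a ξ := by
        by_contra h
        push_neg at h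
        exact hz (funext h)
      obtain ⟨ξ, hξ⟩ := hex
      have h2 : z ξ ∉ ⋂ n, closure (W ξ n) := by rw [hint ξ]; exact hξ
      rw [Set.mem_iInter] at h2
      push_neg at h2
      exact ⟨ξ, h2⟩
  · intro x hx
    have key : {p : Γ × ℕ | x ∈ closure {z : ∀ γ, K γ | z p.1 ∉ closure (W p.1 p.2)}} ⊆
        {γ | x γ ≠ a γ} ×ˢ (Set.univ : Set ℕ) := by
      rintro ⟨ξ, n⟩ hp
      refine ⟨?_, trivial⟩
      simp only [Set.mem_setOf_eq] at hp ⊢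
      intro hxa
      have hcont : Continuous (fun z : ∀ γ, K γ => z ξ) := continuous_apply ξ
      have hmem : x ξ ∈ closure ((closure (W ξ n))ᶜ) := by
        have hsub : {z : ∀ γ, K γ | z ξ ∉ closure (W ξ n)} ⊆
            (fun z : ∀ γ, K γ => z ξ) ⁻¹' ((closure (W ξ n))ᶜ) := fun z hz => hz
        exact hcont.closure_preimage_subset _ (closure_mono hsub hp)
      rw [hxa] at hmem
      obtain ⟨y, hy1, hy2⟩ :=
        mem_closure_iff.mp hmem (W ξ (n + 1)) (hopen ξ (n + 1)) (haW ξ (n + 1))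
      exact hy2 (subset_closure ((hdec ξ n) (subset_closure hy1)))
    exact (hx.prod Set.countable_univ).mono key
end
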